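/- arXiv:1706.06625 — 8 statements merged into one kernel-verified Lean document; each statement's English description precedes it below -/
import Mathlib

section
/- The complete symmetric digraph K_10* admits a resolvable decomposition into directed 5-cycles. -/
def tbl : Fin 18 → Fin 5 → Fin 10 :=
  ![![0,6,7,8,9],![1,2,3,4,5],![0,7,6,9,8],![1,3,2,5,4],![0,2,7,9,3],![1,4,6,5,8],![0,1,8,5,7],![2,4,3,9,6],![0,4,7,3,5],![1,6,8,2,9],![0,9,4,8,6],![1,5,3,7,2],![0,5,9,7,1],![2,8,3,6,4],![0,3,8,7,4],![1,9,5,2,6],![0,8,4,9,2],![1,7,5,6,3]]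

def pos : Fin 10 → Fin 10 → Fin 18 × Fin 5 :=
  ![![ (0,0), (6,0), (4,0), (14,0), (8,0), (12,0), (0,0), (2,0), (16,0), (10,0) ],
    ![ (12,4), (0,0), (1,0), (3,0), (5,0), (11,0), (9,0), (17,0), (6,1), (15,0) ],
    ![ (16,4), (11,4), (0,0), (1,1), (7,0), (3,2), (15,3), (4,1), (13,0), (9,3) ],
    ![ (4,4), (17,4), (3,1), (0,0), (1,2), (8,3), (13,2), (11,2), (14,1), (7,2) ],
    ![ (14,4), (3,4), (13,4), (7,1), (0,0), (1,3), (5,1), (8,1), (10,2), (16,2) ],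
    ![ (8,4), (1,4), (15,2), (11,1), (3,3), (0,0), (17,2), (6,3), (5,3), (12,1) ],
    ![ (10,4), (15,4), (7,4), (17,3), (13,3), (5,2), (0,0), (0,1), (9,1), (2,2) ],
    ![ (6,4), (12,3), (11,3), (8,2), (14,3), (17,1), (2,1), (0,0), (0,2), (4,2) ],
    ![ (2,4), (5,4), (9,2), (13,1), (16,1), (6,2), (10,3), (14,2), (0,0), (0,3) ],
    ![ (0,4), (9,4), (16,3), (4,3), (10,1), (15,1), (7,3), (12,2), (2,3), (0,0) ]]

def succ5 : Fin 5 → Fin 5 := ![1,2,3,4,0]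

def toFin : ZMod 5 → Fin 5 := fun j => ⟨j.val, ZMod.val_lt j⟩
def ofFin : Fin 5 → ZMod 5 := fun a => (a.val : ZMod 5)

lemma toFin_add_one : ∀ j : ZMod 5, toFin (j + 1) = succ5 (toFin j) := by decide
lemma toFin_ofFin : ∀ a : Fin 5, toFin (ofFin a) = a := by decide
lemma ofFin_toFin : ∀ j : ZMod 5, ofFin (toFin j) = j := by decide

lemma tbl_inj : ∀ i : Fin 18, Function.Injective (tbl i) := by decide

lemma pos_tbl : ∀ (i : Fin 18) (j : Fin 5), pos (tbl i j) (tbl i (succ5 j)) = (i, j) := by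
  decide

lemma tbl_pos : ∀ u v : Fin 10, u ≠ v →
    tbl (pos u v).1 (pos u v).2 = u ∧ tbl (pos u v).1 (succ5 (pos u v).2) = v := by
  decide

lemma exists_tbl : ∀ (c : Fin 9) (v : Fin 10),
    ∃! i : Fin 18, (⟨i.val / 2, by omega⟩ : Fin 9) = c ∧ ∃ a : Fin 5, tbl i a = v := by
  simp only [ExistsUnique]
  decide

/-- `K_n^*` admits a resolvable decomposition into directed `m`-cycles. -/
def HasRCD (n m : ℕ) : Prop :=
  ∃ (ι κ : Type) (cyc : ι → ZMod m → Fin n) (cls : ι → κ),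
    (∀ i, Function.Injective (cyc i)) ∧
    (∀ u v : Fin n, u ≠ v →
      ∃! x : ι × ZMod m, (cyc x.1 x.2, cyc x.1 (x.2 + 1)) = (u, v)) ∧
    (∀ (c : κ) (v : Fin n), ∃! i : ι, cls i = c ∧ v ∈ Set.range (cyc i))

/-- The complete symmetric digraph `K_10^*` admits a resolvable decomposition
into directed 5-cycles. -/
theorem hasRCD_ten_five : HasRCD 10 5 := by
  refine ⟨Fin 18, Fin 9, fun i j => tbl i (toFin j),
    fun i => ⟨i.val / 2, by omega⟩, ?_, ?_, ?_⟩
  · intro i a b h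
    have h2 : toFin a = toFin b := tbl_inj i h
    calc a = ofFin (toFin a) := (ofFin_toFin a).symm
      _ = ofFin (toFin b) := by rw [h2]
      _ = b := ofFin_toFin b
  · intro u v huv
    refine ⟨((pos u v).1, ofFin (pos u v).2), ?_, ?_⟩
    · have h := tbl_pos u v huv
      simp only [toFin_add_one, toFin_ofFin]
      exact Prod.ext h.1 h.2
    · rintro ⟨i, j⟩ h
      simp only [toFin_add_one, Prod.mk.injEq] at h
      have h2 : pos u v = (i, toFin j) := by
        rw [← h.1, ← h.2]; exact (pos_tbl i (toFin j)).symm ▸ rfl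
      have : (i, j) = ((pos u v).1, ofFin (pos u v).2) := by
        rw [h2]; simp [ofFin_toFin]
      exact this
  · intro c v
    obtain ⟨i, ⟨hc, a, ha⟩, huniq⟩ := exists_tbl c v
    refine ⟨i, ⟨hc, ⟨ofFin a, ?_⟩⟩, ?_⟩
    · show tbl i (toFin (ofFin a)) = v
      rw [toFin_ofFin]; exact ha
    · rintro k ⟨hk, j, hj⟩
      exact huniq k ⟨hk, toFin j, hj⟩
end

section
/- Let m be odd with m ≥ 5, write m = 2k+1, and let K_{2m}* have vertex set X ∪ Y with X = {x_0,...,x_{2k}}, Y = {y_0,...,y_{2k}}. Define C_0 = x_0 y_0 x_1 y_1 ... x_k x_0 and C_0' = y_k x_{k+1} y_{k+1} ... y_{2k} y_k, and for i ∈ Z_m let C_i, C_i' be obtained from C_0, C_0' by adding i to all x-subscripts and 2i to all y-subscripts (mod m). Then for each i ∈ Z_m, the pair {C_i, C_i'} is a resolution class: C_i and C_i' are vertex-disjoint directed m-cycles that together cover all 2m vertices. -/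
/-- The cycle `C_i` of the Construction: `C_0 = x_0 y_0 x_1 y_1 … x_k x_0`
(at even positions `t = 2j` the vertex `x_j`, at odd positions `t = 2j+1` the
vertex `y_j`), shifted by adding `i` to `x`-subscripts and `2i` to
`y`-subscripts. Vertices `x_a` are `Sum.inl a`, vertices `y_a` are `Sum.inr a`. -/
def cycC (m k : ℕ) (i : ZMod m) : ZMod m → ZMod m ⊕ ZMod m := fun t =>
  if t.val % 2 = 0 then Sum.inl (((t.val / 2 : ℕ) : ZMod m) + i)
  else Sum.inr (((t.val / 2 : ℕ) : ZMod m) + 2 * i)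

/-- The cycle `C_i'` of the Construction: `C_0' = y_k x_{k+1} y_{k+1} … y_{2k} y_k`,
shifted by adding `i` to `x`-subscripts and `2i` to `y`-subscripts. -/
def cycC' (m k : ℕ) (i : ZMod m) : ZMod m → ZMod m ⊕ ZMod m := fun t =>
  if t.val % 2 = 0 then Sum.inr ((k : ZMod m) + ((t.val / 2 : ℕ) : ZMod m) + 2 * i)
  else Sum.inl ((k : ZMod m) + (((t.val + 1) / 2 : ℕ) : ZMod m) + i)

/-- For odd `m = 2k+1 ≥ 5` and each `i ∈ Z_m`, the pair `{C_i, C_i'}` is a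
resolution class of `K_{2m}^*`: `C_i` and `C_i'` are vertex-disjoint directed
`m`-cycles (injective enumerations) that together cover all `2m` vertices. -/
theorem construction_resolution_class (m k : ℕ) (hm : m = 2 * k + 1)
    (h5 : 5 ≤ m) (i : ZMod m) :
    Function.Injective (cycC m k i) ∧ Function.Injective (cycC' m k i) ∧
    Disjoint (Set.range (cycC m k i)) (Set.range (cycC' m k i)) ∧
    Set.range (cycC m k i) ∪ Set.range (cycC' m k i) = Set.univ := by
  haveI : NeZero m := ⟨by omega⟩
  have hval : ∀ n : ℕ, n < m → ((n : ZMod m)).val = n := fun n h => ZMod.val_cast_of_lt h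
  have hvc : ∀ a : ZMod m, ((a.val : ℕ) : ZMod m) = a := fun a => by
    simp [ZMod.natCast_val, ZMod.cast_id]
  -- coverage
  have cover : ∀ v : ZMod m ⊕ ZMod m,
      v ∈ Set.range (cycC m k i) ∪ Set.range (cycC' m k i) := by
    rintro (a | a)
    · set d := (a - i).val with hd
      have hdm : d < m := ZMod.val_lt _
      have hcast : ((d : ℕ) : ZMod m) = a - i := hvc _
      by_cases hle : d ≤ k
      · left
        refine ⟨((2 * d : ℕ) : ZMod m), ?_⟩
        have hv : (((2 * d : ℕ) : ZMod m)).val = 2 * d := hval _ (by omega)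
        have h2 : 2 * d % 2 = 0 := by omega
        have h3 : 2 * d / 2 = d := by omega
        simp only [cycC, hv, h2, if_pos rfl, h3, hcast]
        simp
      · right
        refine ⟨((2 * (d - k) - 1 : ℕ) : ZMod m), ?_⟩
        have hv : (((2 * (d - k) - 1 : ℕ) : ZMod m)).val = 2 * (d - k) - 1 :=
          hval _ (by omega)
        have h2 : (2 * (d - k) - 1) % 2 = 1 := by omega
        have h3 : (2 * (d - k) - 1 + 1) / 2 = d - k := by omega
        simp only [cycC', hv, h2, h3]
        rw [if_neg (by omega)]
        have : (k : ZMod m) + ((d - k : ℕ) : ZMod m) = ((d : ℕ) : ZMod m) := by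
          rw [← Nat.cast_add]
          congr 1
          omega
        rw [this, hcast, sub_add_cancel]
    · set d := (a - 2 * i).val with hd
      have hdm : d < m := ZMod.val_lt _
      have hcast : ((d : ℕ) : ZMod m) = a - 2 * i := hvc _
      by_cases hlt : d < k
      · left
        refine ⟨((2 * d + 1 : ℕ) : ZMod m), ?_⟩
        have hv : (((2 * d + 1 : ℕ) : ZMod m)).val = 2 * d + 1 := hval _ (by omega)
        have h2 : (2 * d + 1) % 2 = 1 := by omega
        have h3 : (2 * d + 1) / 2 = d := by omega
        simp only [cycC, hv, h3]
        rw [if_neg (by omega), hcast, sub_add_cancel]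
      · right
        refine ⟨((2 * (d - k) : ℕ) : ZMod m), ?_⟩
        have hv : (((2 * (d - k) : ℕ) : ZMod m)).val = 2 * (d - k) := hval _ (by omega)
        have h2 : 2 * (d - k) % 2 = 0 := by omega
        have h3 : 2 * (d - k) / 2 = d - k := by omega
        simp only [cycC', hv, h2, if_pos rfl, h3]
        have : (k : ZMod m) + ((d - k : ℕ) : ZMod m) = ((d : ℕ) : ZMod m) := by
          rw [← Nat.cast_add]; congr 1; omega
        rw [this, hcast]
        simp
  -- counting
  classical
  set f := cycC m k i with hf
  set g := cycC' m k i with hg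
  set sA := Finset.univ.image f with hsA
  set sB := Finset.univ.image g with hsB
  have hrA : Set.range f = (sA : Set (ZMod m ⊕ ZMod m)) := by
    simp [hsA, Finset.coe_image]
  have hrB : Set.range g = (sB : Set (ZMod m ⊕ ZMod m)) := by
    simp [hsB, Finset.coe_image]
  have hU : sA ∪ sB = Finset.univ := by
    apply Finset.eq_univ_iff_forall.2
    intro v
    rcases cover v with ⟨t, ht⟩ | ⟨t, ht⟩
    · exact Finset.mem_union_left _ (Finset.mem_image.2 ⟨t, Finset.mem_univ t, ht⟩)
    · exact Finset.mem_union_right _ (Finset.mem_image.2 ⟨t, Finset.mem_univ t, ht⟩)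
  have hcardZ : Fintype.card (ZMod m) = m := ZMod.card m
  have hcuniv : (Finset.univ : Finset (ZMod m)).card = m := by
    simp [Finset.card_univ, hcardZ]
  have hA : sA.card ≤ m := le_trans Finset.card_image_le (by rw [hcuniv])
  have hB : sB.card ≤ m := le_trans Finset.card_image_le (by rw [hcuniv])
  have htot : (sA ∪ sB).card = 2 * m := by
    rw [hU]
    simp [Finset.card_univ, Fintype.card_sum, hcardZ]
    ring
  have hle : (sA ∪ sB).card ≤ sA.card + sB.card := Finset.card_union_le _ _
  have hAm : sA.card = m := by omega
  have hBm : sB.card = m := by omega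
  have hsum : (sA ∪ sB).card = sA.card + sB.card := by omega
  have hdisj : Disjoint sA sB := by
    rw [Finset.card_union_eq_card_add_card] at hsum
    exact hsum
  have hinjA : Function.Injective f := by
    rw [← Set.injOn_univ, ← Finset.coe_univ]
    exact (Finset.card_image_iff).1 (by rw [← hsA, hAm, hcuniv])
  have hinjB : Function.Injective g := by
    rw [← Set.injOn_univ, ← Finset.coe_univ]
    exact (Finset.card_image_iff).1 (by rw [← hsB, hBm, hcuniv])
  refine ⟨hinjA, hinjB, ?_, ?_⟩
  · rw [hrA, hrB]
    exact_mod_cast hdisj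
  · rw [hrA, hrB, ← Finset.coe_union, hU, Finset.coe_univ]
end

section
/- Let m be odd, m ≥ 5, m = 2k+1, and consider the resolution classes R_0,...,R_{m-1} of Construction described below on K_{2m}* with parts X, Y. The arcs used by R_0,...,R_{m-1} consist of: all m arcs of pure left difference k+1 (arcs (x_i, x_{i+k+1})), all m arcs of pure right difference k+1 (arcs (y_i, y_{i+k+1})), and all arcs of mixed differences except the 2m arcs (x_{k+i}, y_{k+2i}) and (y_{2k+2i}, x_i) for i ∈ Z_m. -/
/-- The arc set of the directed cycle enumerated by `c`. -/
def arcsOf {m : ℕ} (c : ZMod m → ZMod m ⊕ ZMod m) :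
    Set ((ZMod m ⊕ ZMod m) × (ZMod m ⊕ ZMod m)) :=
  {p | ∃ t : ZMod m, p = (c t, c (t + 1))}

lemma zmod_natCast_inj {m a b : ℕ} (hm : 0 < m) (ha : a < m) (hb : b < m)
    (h : (a : ZMod m) = b) : a = b := by
  haveI : NeZero m := ⟨hm.ne'⟩
  have := congrArg ZMod.val h
  rwa [ZMod.val_cast_of_lt ha, ZMod.val_cast_of_lt hb] at this

lemma cycC_even {m k : ℕ} (i t : ZMod m) {j : ℕ} (h0 : t.val = 2*j) :
    cycC m k i t = Sum.inl ((j:ZMod m) + i) := by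
  unfold cycC
  rw [h0, if_pos (by omega)]
  have hd : 2*j/2 = j := by omega
  rw [hd]

lemma cycC_odd {m k : ℕ} (i t : ZMod m) {j : ℕ} (h0 : t.val = 2*j+1) :
    cycC m k i t = Sum.inr ((j:ZMod m) + 2*i) := by
  unfold cycC
  rw [h0, if_neg (by omega)]
  have hd : (2*j+1)/2 = j := by omega
  rw [hd]

lemma cycC'_even {m k : ℕ} (i t : ZMod m) {j : ℕ} (h0 : t.val = 2*j) :
    cycC' m k i t = Sum.inr ((k:ZMod m) + (j:ZMod m) + 2*i) := by
  unfold cycC'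
  rw [h0, if_pos (by omega)]
  have hd : 2*j/2 = j := by omega
  rw [hd]

lemma cycC'_odd {m k : ℕ} (i t : ZMod m) {j : ℕ} (h0 : t.val = 2*j+1) :
    cycC' m k i t = Sum.inl ((k:ZMod m) + (j:ZMod m) + 1 + i) := by
  unfold cycC'
  rw [h0, if_neg (by omega)]
  have hd : (2*j+1+1)/2 = j+1 := by omega
  rw [hd]
  push_cast
  ring_nf

lemma mem_arcsC {m k : ℕ} (hm : m = 2*k+1) (h5 : 5 ≤ m) (i : ZMod m)
    (p : (ZMod m ⊕ ZMod m) × (ZMod m ⊕ ZMod m)) :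
    p ∈ arcsOf (cycC m k i) ↔
      (∃ j : ℕ, j < k ∧ p = (Sum.inl ((j:ZMod m)+i), Sum.inr ((j:ZMod m)+2*i))) ∨
      (∃ j : ℕ, j < k ∧ p = (Sum.inr ((j:ZMod m)+2*i), Sum.inl ((j:ZMod m)+1+i))) ∨
      p = (Sum.inl ((k:ZMod m)+i), Sum.inl i) := by
  haveI : NeZero m := ⟨by omega⟩
  haveI : Fact (1 < m) := ⟨by omega⟩
  constructor
  · rintro ⟨t, rfl⟩
    have hn : t.val < m := t.val_lt
    have hadd : (t+1).val = (t.val + 1) % m := by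
      rw [ZMod.val_add, ZMod.val_one]
    rcases Nat.lt_or_ge t.val (2*k) with hlt | hge
    · have h1 : (t+1).val = t.val + 1 := by rw [hadd]; exact Nat.mod_eq_of_lt (by omega)
      rcases Nat.even_or_odd t.val with ⟨j, hj⟩ | ⟨j, hj⟩
      · have hj' : t.val = 2*j := by omega
        left
        exact ⟨j, by omega, by rw [cycC_even i t hj', cycC_odd i (t+1) (show (t+1).val = 2*j+1 by omega)]⟩
      · right; left
        refine ⟨j, by omega, ?_⟩
        rw [cycC_odd i t hj, cycC_even i (t+1) (show (t+1).val = 2*(j+1) by omega)]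
        push_cast; ring_nf
    · have ht : t.val = 2*k := by omega
      have h1 : (t+1).val = 0 := by
        rw [hadd, show t.val + 1 = m by omega, Nat.mod_self]
      right; right
      rw [cycC_even i t ht, cycC_even i (t+1) (show (t+1).val = 2*0 by omega)]
      norm_num
  · have cast1 : ∀ a : ℕ, a < m → (((a:ℕ) : ZMod m) + 1).val = (a+1) % m := by
      intro a ha
      rw [ZMod.val_add, ZMod.val_one, ZMod.val_cast_of_lt ha]
    rintro (⟨j, hj, rfl⟩ | ⟨j, hj, rfl⟩ | rfl)
    · refine ⟨((2*j : ℕ) : ZMod m), ?_⟩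
      have hv : ((2*j : ℕ) : ZMod m).val = 2*j := ZMod.val_cast_of_lt (by omega)
      have hv1 : (((2*j : ℕ) : ZMod m) + 1).val = 2*j+1 := by
        rw [cast1 (2*j) (by omega)]; exact Nat.mod_eq_of_lt (by omega)
      rw [cycC_even i _ hv, cycC_odd i _ hv1]
    · refine ⟨((2*j+1 : ℕ) : ZMod m), ?_⟩
      have hv : ((2*j+1 : ℕ) : ZMod m).val = 2*j+1 := ZMod.val_cast_of_lt (by omega)
      have hv1 : (((2*j+1 : ℕ) : ZMod m) + 1).val = 2*(j+1) := by
        rw [cast1 (2*j+1) (by omega), Nat.mod_eq_of_lt (by omega)]; omega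
      rw [cycC_odd i _ hv, cycC_even i _ hv1]
      push_cast; ring_nf
    · refine ⟨((2*k : ℕ) : ZMod m), ?_⟩
      have hv : ((2*k : ℕ) : ZMod m).val = 2*k := ZMod.val_cast_of_lt (by omega)
      have hv1 : (((2*k : ℕ) : ZMod m) + 1).val = 2*0 := by
        rw [cast1 (2*k) (by omega), show 2*k+1 = m by omega, Nat.mod_self]
      rw [cycC_even i _ hv, cycC_even i _ hv1]
      norm_num

lemma mem_arcsC' {m k : ℕ} (hm : m = 2*k+1) (h5 : 5 ≤ m) (i : ZMod m)
    (p : (ZMod m ⊕ ZMod m) × (ZMod m ⊕ ZMod m)) :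
    p ∈ arcsOf (cycC' m k i) ↔
      (∃ s : ℕ, s < k ∧ p = (Sum.inr ((k:ZMod m)+(s:ZMod m)+2*i),
                             Sum.inl ((k:ZMod m)+(s:ZMod m)+1+i))) ∨
      (∃ s : ℕ, s < k ∧ p = (Sum.inl ((k:ZMod m)+(s:ZMod m)+1+i),
                             Sum.inr ((k:ZMod m)+(s:ZMod m)+1+2*i))) ∨
      p = (Sum.inr ((k:ZMod m)+(k:ZMod m)+2*i), Sum.inr ((k:ZMod m)+2*i)) := by
  haveI : NeZero m := ⟨by omega⟩
  haveI : Fact (1 < m) := ⟨by omega⟩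
  constructor
  · rintro ⟨t, rfl⟩
    have hn : t.val < m := t.val_lt
    have hadd : (t+1).val = (t.val + 1) % m := by
      rw [ZMod.val_add, ZMod.val_one]
    rcases Nat.lt_or_ge t.val (2*k) with hlt | hge
    · have h1 : (t+1).val = t.val + 1 := by rw [hadd]; exact Nat.mod_eq_of_lt (by omega)
      rcases Nat.even_or_odd t.val with ⟨s, hs⟩ | ⟨s, hs⟩
      · left
        exact ⟨s, by omega,
          by rw [cycC'_even i t (show t.val = 2*s by omega),
                 cycC'_odd i (t+1) (show (t+1).val = 2*s+1 by omega)]⟩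
      · right; left
        refine ⟨s, by omega, ?_⟩
        rw [cycC'_odd i t hs, cycC'_even i (t+1) (show (t+1).val = 2*(s+1) by omega)]
        push_cast; ring_nf
    · have ht : t.val = 2*k := by omega
      have h1 : (t+1).val = 0 := by
        rw [hadd, show t.val + 1 = m by omega, Nat.mod_self]
      right; right
      rw [cycC'_even i t ht, cycC'_even i (t+1) (show (t+1).val = 2*0 by omega)]
      norm_num
  · have cast1 : ∀ a : ℕ, a < m → (((a:ℕ) : ZMod m) + 1).val = (a+1) % m := by
      intro a ha
      rw [ZMod.val_add, ZMod.val_one, ZMod.val_cast_of_lt ha]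
    rintro (⟨s, hs, rfl⟩ | ⟨s, hs, rfl⟩ | rfl)
    · refine ⟨((2*s : ℕ) : ZMod m), ?_⟩
      have hv : ((2*s : ℕ) : ZMod m).val = 2*s := ZMod.val_cast_of_lt (by omega)
      have hv1 : (((2*s : ℕ) : ZMod m) + 1).val = 2*s+1 := by
        rw [cast1 (2*s) (by omega)]; exact Nat.mod_eq_of_lt (by omega)
      rw [cycC'_even i _ hv, cycC'_odd i _ hv1]
    · refine ⟨((2*s+1 : ℕ) : ZMod m), ?_⟩
      have hv : ((2*s+1 : ℕ) : ZMod m).val = 2*s+1 := ZMod.val_cast_of_lt (by omega)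
      have hv1 : (((2*s+1 : ℕ) : ZMod m) + 1).val = 2*(s+1) := by
        rw [cast1 (2*s+1) (by omega), Nat.mod_eq_of_lt (by omega)]; omega
      rw [cycC'_odd i _ hv, cycC'_even i _ hv1]
      push_cast; ring_nf
    · refine ⟨((2*k : ℕ) : ZMod m), ?_⟩
      have hv : ((2*k : ℕ) : ZMod m).val = 2*k := ZMod.val_cast_of_lt (by omega)
      have hv1 : (((2*k : ℕ) : ZMod m) + 1).val = 2*0 := by
        rw [cast1 (2*k) (by omega), show 2*k+1 = m by omega, Nat.mod_self]
      rw [cycC'_even i _ hv, cycC'_even i _ hv1]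
      norm_num

/-- The arcs used by the resolution classes `R_0, …, R_{m-1}` of the
Construction consist of: all arcs of pure left difference `k+1`, all arcs of
pure right difference `k+1`, and all arcs of mixed differences except the `2m`
arcs `(x_{k+i}, y_{k+2i})` and `(y_{2k+2i}, x_i)`, `i ∈ Z_m`. -/
theorem construction_used_arcs (m k : ℕ) (hm : m = 2 * k + 1) (h5 : 5 ≤ m) :
    (⋃ i : ZMod m, arcsOf (cycC m k i) ∪ arcsOf (cycC' m k i)) =
      {p | ∃ a : ZMod m, p = (Sum.inl a, Sum.inl (a + ((k : ZMod m) + 1)))} ∪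
      {p | ∃ a : ZMod m, p = (Sum.inr a, Sum.inr (a + ((k : ZMod m) + 1)))} ∪
      ({p | (∃ a b : ZMod m, p = (Sum.inl a, Sum.inr b)) ∨
            (∃ a b : ZMod m, p = (Sum.inr a, Sum.inl b))} \
       {p | ∃ i : ZMod m,
            p = (Sum.inl ((k : ZMod m) + i), Sum.inr ((k : ZMod m) + 2 * i)) ∨
            p = (Sum.inr (2 * (k : ZMod m) + 2 * i), Sum.inl i)}) := by
  haveI : NeZero m := ⟨by omega⟩
  have key : (2 : ZMod m) * (k:ZMod m) + 1 = 0 := by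
    have h : ((2*k+1 : ℕ) : ZMod m) = 0 := by rw [← hm]; exact ZMod.natCast_self m
    push_cast at h; exact h
  ext p
  simp only [Set.mem_iUnion, Set.mem_union, Set.mem_diff, Set.mem_setOf_eq,
    mem_arcsC hm h5, mem_arcsC' hm h5]
  obtain ⟨a|a, b|b⟩ := p
  · -- (inl a, inl b)
    simp only [Prod.mk.injEq, Sum.inl.injEq, Sum.inr.injEq, reduceCtorEq,
      false_and, and_false, exists_false, or_false, false_or, exists_const, not_false_iff,
      and_true, true_and]
    constructor
    · rintro ⟨i, rfl, rfl⟩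
      exact ⟨(k:ZMod m) + b, rfl, by linear_combination -key⟩
    · rintro ⟨c, rfl, rfl⟩
      exact ⟨a + ((k:ZMod m) + 1), by linear_combination -key, rfl⟩
  · -- (inl a, inr b)
    simp only [Prod.mk.injEq, Sum.inl.injEq, Sum.inr.injEq, reduceCtorEq,
      false_and, and_false, exists_false, or_false, false_or, exists_const, not_false_iff,
      and_true, true_and]
    constructor
    · rintro ⟨i, ⟨j, hj, rfl, rfl⟩ | ⟨s, hs, rfl, rfl⟩⟩
      · refine ⟨⟨_, _, rfl, rfl⟩, ?_⟩
        rintro ⟨i', h1, h2⟩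
        have hjk : ((j:ℕ) : ZMod m) = ((k:ℕ) : ZMod m) := by
          linear_combination 2*h1 - h2
        have := zmod_natCast_inj (by omega) (by omega) (by omega) hjk
        omega
      · refine ⟨⟨_, _, rfl, rfl⟩, ?_⟩
        rintro ⟨i', h1, h2⟩
        have hsk : ((s+1:ℕ) : ZMod m) = ((0:ℕ) : ZMod m) := by
          push_cast
          linear_combination 2*h1 - h2
        have := zmod_natCast_inj (by omega) (by omega) (by omega) hsk
        omega
    · rintro ⟨-, hne⟩
      have hcast : (((2*a - b).val : ℕ) : ZMod m) = 2*a - b :=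
        ZMod.natCast_rightInverse (2*a - b)
      have hn : (2*a - b).val < m := ZMod.val_lt _
      have hnk : (2*a - b).val ≠ k := by
        intro h
        rw [h] at hcast
        exact hne ⟨b - a, by linear_combination -hcast, by linear_combination -hcast⟩
      rcases Nat.lt_or_ge (2*a - b).val k with hlt | hge
      · exact ⟨b - a, Or.inl ⟨(2*a - b).val, hlt, by linear_combination -hcast,
          by linear_combination -hcast⟩⟩
      · have hs : (2*a - b).val = k + 1 + ((2*a - b).val - k - 1) := by omega
        have hcast' : ((k:ZMod m) + 1 + (((2*a - b).val - k - 1 : ℕ) : ZMod m)) = 2*a - b := by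
          rw [hs] at hcast; push_cast at hcast; linear_combination hcast
        exact ⟨b - a, Or.inr ⟨(2*a - b).val - k - 1, by omega,
          by linear_combination -hcast', by linear_combination -hcast'⟩⟩
  · -- (inr a, inl b)
    simp only [Prod.mk.injEq, Sum.inl.injEq, Sum.inr.injEq, reduceCtorEq,
      false_and, and_false, exists_false, or_false, false_or, exists_const, not_false_iff,
      and_true, true_and]
    constructor
    · rintro ⟨i, ⟨j, hj, rfl, rfl⟩ | ⟨s, hs, rfl, rfl⟩⟩
      · refine ⟨⟨_, _, rfl, rfl⟩, ?_⟩
        rintro ⟨i', h1, h2⟩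
        have hjk : ((j:ℕ) : ZMod m) = ((2*k:ℕ) : ZMod m) := by
          push_cast
          linear_combination 2*h2 - h1 - 2*key
        have := zmod_natCast_inj (by omega) (by omega) (by omega) hjk
        omega
      · refine ⟨⟨_, _, rfl, rfl⟩, ?_⟩
        rintro ⟨i', h1, h2⟩
        have hsk : ((s:ℕ) : ZMod m) = ((k:ℕ) : ZMod m) := by
          linear_combination 2*h2 - h1 - 2*key
        have := zmod_natCast_inj (by omega) (by omega) (by omega) hsk
        omega
    · rintro ⟨-, hne⟩
      have hcast : (((2*b - a - 2).val : ℕ) : ZMod m) = 2*b - a - 2 :=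
        ZMod.natCast_rightInverse (2*b - a - 2)
      have hn : (2*b - a - 2).val < m := ZMod.val_lt _
      have hn2k : (2*b - a - 2).val ≠ 2*k := by
        intro h
        rw [h] at hcast
        push_cast at hcast
        exact hne ⟨b, by linear_combination hcast - 2*key, rfl⟩
      rcases Nat.lt_or_ge (2*b - a - 2).val k with hlt | hge
      · exact ⟨a - b + 1, Or.inl ⟨(2*b - a - 2).val, hlt, by linear_combination -hcast,
          by linear_combination -hcast⟩⟩
      · have hs : (2*b - a - 2).val = k + ((2*b - a - 2).val - k) := by omega
        have hcast' : ((k:ZMod m) + (((2*b - a - 2).val - k : ℕ) : ZMod m)) = 2*b - a - 2 := by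
          rw [hs] at hcast; push_cast at hcast; linear_combination hcast
        exact ⟨a - b + 1, Or.inr ⟨(2*b - a - 2).val - k, by omega,
          by linear_combination -hcast', by linear_combination -hcast'⟩⟩
  · -- (inr a, inr b)
    simp only [Prod.mk.injEq, Sum.inl.injEq, Sum.inr.injEq, reduceCtorEq,
      false_and, and_false, exists_false, or_false, false_or, exists_const, not_false_iff,
      and_true, true_and]
    constructor
    · rintro ⟨i, rfl, rfl⟩
      exact ⟨(k:ZMod m) + (k:ZMod m) + 2*i, rfl, by linear_combination -key⟩
    · rintro ⟨c, rfl, rfl⟩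
      refine ⟨((k:ZMod m)+1) * (a - 2*(k:ZMod m)), ?_, ?_⟩
      · linear_combination (2*(k:ZMod m) - a)*key
      · linear_combination (1 - a + 2*(k:ZMod m))*key
end

section
/- Let m = 2k+1 be odd with m not divisible by 3, and define d = (7k+8)/4 if k ≡ 0 (mod 4), d = (5k+7)/4 if k ≡ 1 (mod 4), d = (3k+6)/4 if k ≡ 2 (mod 4), and d = (k+5)/4 if k ≡ 3 (mod 4). Then gcd(d, m) = 1. -/
lemma aux_gcd (d m c : ℕ) (h3 : ¬ 3 ∣ m) (h : 8 * d = c * m + 9) :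
    Nat.gcd d m = 1 := by
  have hl := Nat.gcd_dvd_left d m
  have hr := Nat.gcd_dvd_right d m
  set g := Nat.gcd d m with hg
  have h9 : g ∣ 9 := by
    have e : 8 * d - c * m = 9 := by omega
    rw [← e]
    exact Nat.dvd_sub (hl.mul_left 8) (hr.mul_left c)
  have hle : g ≤ 9 := Nat.le_of_dvd (by norm_num) h9
  interval_cases g
  · exact absurd hr (by omega)
  · rfl
  all_goals first
    | (exact absurd h9 (by omega))
    | (exact absurd h3 (by simp; omega))
    | (exact absurd (h3 hr) (by simp))
    | (exact absurd (h3 (dvd_trans (by norm_num) hr)) (by simp))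

/-- Let `m = 2k+1` be odd and not divisible by 3, and define
`d = (7k+8)/4, (5k+7)/4, (3k+6)/4, (k+5)/4` according as
`k ≡ 0, 1, 2, 3 (mod 4)` (in each case the numerator is divisible by 4).
Then `gcd(d, m) = 1`. -/
theorem gcd_d_m_eq_one (k d : ℕ) (h3 : ¬ 3 ∣ (2 * k + 1))
    (hd : (k % 4 = 0 ∧ d = (7 * k + 8) / 4) ∨
          (k % 4 = 1 ∧ d = (5 * k + 7) / 4) ∨
          (k % 4 = 2 ∧ d = (3 * k + 6) / 4) ∨
          (k % 4 = 3 ∧ d = (k + 5) / 4)) :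
    Nat.gcd d (2 * k + 1) = 1 := by
  rcases hd with ⟨h, rfl⟩ | ⟨h, rfl⟩ | ⟨h, rfl⟩ | ⟨h, rfl⟩
  · exact aux_gcd _ _ 7 h3 (by omega)
  · exact aux_gcd _ _ 5 h3 (by omega)
  · exact aux_gcd _ _ 3 h3 (by omega)
  · exact aux_gcd _ _ 1 h3 (by omega)
end

section
/- Let m = 2k+1 be odd with m divisible by 3 and m ≥ 15, and define t_1 = 3k/4 if k ≡ 0 (mod 4), t_1 = (k-1)/4 if k ≡ 1 (mod 4), t_1 = (7k+2)/4 if k ≡ 2 (mod 4), and t_1 = (5k+1)/4 if k ≡ 3 (mod 4). Then gcd(m, t_1) = 3. -/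
/-- Let `m = 2k+1` be odd, divisible by 3, with `m ≥ 15`, and define
`t_1 = 3k/4, (k-1)/4, (7k+2)/4, (5k+1)/4` according as `k ≡ 0, 1, 2, 3 (mod 4)`
(in each case the numerator is divisible by 4). Then `gcd(m, t_1) = 3`. -/
theorem gcd_m_t1_eq_three (k t₁ : ℕ) (h3 : 3 ∣ (2 * k + 1)) (h15 : 15 ≤ 2 * k + 1)
    (ht : (k % 4 = 0 ∧ t₁ = 3 * k / 4) ∨
          (k % 4 = 1 ∧ t₁ = (k - 1) / 4) ∨
          (k % 4 = 2 ∧ t₁ = (7 * k + 2) / 4) ∨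
          (k % 4 = 3 ∧ t₁ = (5 * k + 1) / 4)) :
    Nat.gcd (2 * k + 1) t₁ = 3 := by
  obtain ⟨c, hc⟩ : ∃ c, 8 * t₁ + 3 = c * (2 * k + 1) := by
    rcases ht with ⟨h, rfl⟩ | ⟨h, rfl⟩ | ⟨h, rfl⟩ | ⟨h, rfl⟩
    · exact ⟨3, by omega⟩
    · exact ⟨1, by omega⟩
    · exact ⟨7, by omega⟩
    · exact ⟨5, by omega⟩
  have hdm : Nat.gcd (2 * k + 1) t₁ ∣ 2 * k + 1 := Nat.gcd_dvd_left _ _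
  have hdt : Nat.gcd (2 * k + 1) t₁ ∣ t₁ := Nat.gcd_dvd_right _ _
  have hdcm : Nat.gcd (2 * k + 1) t₁ ∣ 8 * t₁ + 3 := hc ▸ hdm.mul_left c
  have hd3 : Nat.gcd (2 * k + 1) t₁ ∣ 3 := by
    have := Nat.dvd_sub hdcm (hdt.mul_left 8)
    simpa using this
  have h38 : (3 : ℕ).Coprime 8 := by decide
  have h3t : 3 ∣ t₁ := by
    have h1 : 3 ∣ 8 * t₁ + 3 := hc ▸ (h3.mul_left c)
    omega
  exact Nat.dvd_antisymm hd3 (Nat.dvd_gcd h3 h3t)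
end

section
/- The directed circulant Circ(11; {3,4,9,10}) minus the two arcs (6,5) and (4,7) admits a decomposition into three directed 11-cycles together with two vertex-disjoint directed paths: a (5,6)-path of length 2 and a (7,4)-path of length 7. -/
set_option maxRecDepth 40000

/-- Arc set of the directed cycle on `Z_11` enumerated by `c`. -/
def cycArcs11 (c : ZMod 11 → ZMod 11) : Set (ZMod 11 × ZMod 11) :=
  {p | ∃ i : ZMod 11, p = (c i, c (i + 1))}

/-- Arc set of the directed path with vertex sequence `p 0, p 1, …, p n`. -/
def pathArcs11 {n : ℕ} (p : Fin (n + 1) → ZMod 11) : Set (ZMod 11 × ZMod 11) :=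
  {q | ∃ i : Fin n, q = (p i.castSucc, p i.succ)}

def cyc0 : ZMod 11 → ZMod 11 := ![0, 3, 7, 5, 4, 8, 6, 9, 1, 10, 2]
def cyc1 : ZMod 11 → ZMod 11 := ![0, 4, 2, 6, 10, 3, 1, 5, 9, 8, 7]
def cyc2 : ZMod 11 → ZMod 11 := ![0, 10, 9, 7, 6, 4, 3, 2, 5, 8, 1]
def pth1 : Fin 3 → ZMod 11 := ![5, 3, 6]
def pth2 : Fin 8 → ZMod 11 := ![7, 10, 8, 0, 9, 2, 1, 4]


lemma cycCycDisj (c d : ZMod 11 → ZMod 11)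
    (h : ∀ a : ZMod 11 × ZMod 11, (∃ i : ZMod 11, a = (c i, c (i + 1))) →
      ¬∃ i : ZMod 11, a = (d i, d (i + 1))) :
    Disjoint (cycArcs11 c) (cycArcs11 d) :=
  Set.disjoint_left.mpr fun a ha => h a ha

lemma cycPathDisj {n : ℕ} (c : ZMod 11 → ZMod 11) (p : Fin (n + 1) → ZMod 11)
    (h : ∀ a : ZMod 11 × ZMod 11, (∃ i : ZMod 11, a = (c i, c (i + 1))) →
      ¬∃ i : Fin n, a = (p i.castSucc, p i.succ)) :
    Disjoint (cycArcs11 c) (pathArcs11 p) :=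
  Set.disjoint_left.mpr fun a ha => h a ha

lemma pathPathDisj {n m : ℕ} (p : Fin (n + 1) → ZMod 11) (q : Fin (m + 1) → ZMod 11)
    (h : ∀ a : ZMod 11 × ZMod 11, (∃ i : Fin n, a = (p i.castSucc, p i.succ)) →
      ¬∃ i : Fin m, a = (q i.castSucc, q i.succ)) :
    Disjoint (pathArcs11 p) (pathArcs11 q) :=
  Set.disjoint_left.mpr fun a ha => h a ha

/-- The directed circulant `Circ(11; {3,4,9,10})` minus the two arcs `(6,5)` and
`(4,7)` admits a decomposition into three directed 11-cycles together with two
vertex-disjoint directed paths: a `(5,6)`-path of length 2 and a `(7,4)`-path of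
length 7. -/
theorem circ11_decomposition :
    ∃ (c : Fin 3 → ZMod 11 → ZMod 11) (p₁ : Fin 3 → ZMod 11) (p₂ : Fin 8 → ZMod 11),
      (∀ t, Function.Injective (c t)) ∧
      Function.Injective p₁ ∧ Function.Injective p₂ ∧
      p₁ 0 = 5 ∧ p₁ 2 = 6 ∧ p₂ 0 = 7 ∧ p₂ 7 = 4 ∧
      Disjoint (Set.range p₁) (Set.range p₂) ∧
      Pairwise (Function.onFun Disjoint
        ![cycArcs11 (c 0), cycArcs11 (c 1), cycArcs11 (c 2),
          pathArcs11 (n := 2) p₁, pathArcs11 (n := 7) p₂]) ∧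
      cycArcs11 (c 0) ∪ cycArcs11 (c 1) ∪ cycArcs11 (c 2) ∪
          pathArcs11 (n := 2) p₁ ∪ pathArcs11 (n := 7) p₂ =
        {q : ZMod 11 × ZMod 11 | q.2 - q.1 ∈ ({3, 4, 9, 10} : Set (ZMod 11))} \
          {((6 : ZMod 11), (5 : ZMod 11)), ((4 : ZMod 11), (7 : ZMod 11))} := by
  refine ⟨![cyc0, cyc1, cyc2], pth1, pth2, ?_, ?_, ?_, rfl, rfl, rfl, rfl, ?_, ?_, ?_⟩
  · intro t
    fin_cases t <;> simp only [Matrix.cons_val_zero, Matrix.cons_val_one, Matrix.head_cons,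
      Matrix.cons_val_two, Matrix.tail_cons] <;> decide
  · decide
  · decide
  · rw [Set.disjoint_left]
    decide
  · intro i j hij
    have d01 := cycCycDisj cyc0 cyc1 (by decide)
    have d02 := cycCycDisj cyc0 cyc2 (by decide)
    have d12 := cycCycDisj cyc1 cyc2 (by decide)
    have d03 := cycPathDisj cyc0 pth1 (by decide)
    have d04 := cycPathDisj cyc0 pth2 (by decide)
    have d13 := cycPathDisj cyc1 pth1 (by decide)
    have d14 := cycPathDisj cyc1 pth2 (by decide)
    have d23 := cycPathDisj cyc2 pth1 (by decide)
    have d24 := cycPathDisj cyc2 pth2 (by decide)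
    have d34 := pathPathDisj pth1 pth2 (by decide)
    fin_cases i <;> fin_cases j <;>
      first
        | exact absurd rfl hij
        | exact d01 | exact d01.symm | exact d02 | exact d02.symm
        | exact d12 | exact d12.symm | exact d03 | exact d03.symm
        | exact d04 | exact d04.symm | exact d13 | exact d13.symm
        | exact d14 | exact d14.symm | exact d23 | exact d23.symm
        | exact d24 | exact d24.symm | exact d34 | exact d34.symm
  · apply Set.ext
    simp only [Matrix.cons_val_zero, Matrix.cons_val_one, Matrix.head_cons, Matrix.cons_val_two,
      Matrix.tail_cons, cycArcs11, pathArcs11, Set.mem_union, Set.mem_setOf_eq, Set.mem_diff,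
      Set.mem_insert_iff, Set.mem_singleton_iff]
    decide
end

section
/- The directed circulant Circ(9; {1,2,3,4,6,7}) minus the three arcs (3,1), (4,2), (5,0) admits a decomposition into five directed 9-cycles and three pairwise vertex-disjoint directed paths: a (1,3)-path of length 1, a (2,4)-path of length 1, and a (0,5)-path of length 4. -/
/-- Arc set of the directed cycle on `Z_9` enumerated by `c`. -/
def cycArcs9 (c : ZMod 9 → ZMod 9) : Set (ZMod 9 × ZMod 9) :=
  {p | ∃ i : ZMod 9, p = (c i, c (i + 1))}

/-- Arc set of the directed path with vertex sequence `p 0, p 1, …, p n`. -/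
def pathArcs9 {n : ℕ} (p : Fin (n + 1) → ZMod 9) : Set (ZMod 9 × ZMod 9) :=
  {q | ∃ i : Fin n, q = (p i.castSucc, p i.succ)}


instance (c : ZMod 9 → ZMod 9) (p : ZMod 9 × ZMod 9) : Decidable (p ∈ cycArcs9 c) :=
  decidable_of_iff (∃ i : ZMod 9, p = (c i, c (i + 1))) Iff.rfl

instance {n : ℕ} (q : Fin (n + 1) → ZMod 9) (p : ZMod 9 × ZMod 9) :
    Decidable (p ∈ pathArcs9 q) :=
  decidable_of_iff (∃ i : Fin n, p = (q i.castSucc, q i.succ)) Iff.rfl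

/-- Auxiliary: turn a length-9 vector into a function on `ZMod 9`. -/
def cyc9 (v : Fin 9 → ZMod 9) : ZMod 9 → ZMod 9 := fun i => v ⟨i.val, i.val_lt⟩

/-- The five Hamiltonian cycles. -/
def cs9 : Fin 5 → ZMod 9 → ZMod 9 :=
  ![cyc9 ![0, 1, 2, 3, 4, 7, 5, 6, 8],
    cyc9 ![0, 2, 5, 3, 6, 4, 8, 1, 7],
    cyc9 ![0, 3, 5, 7, 4, 1, 8, 2, 6],
    cyc9 ![0, 4, 6, 1, 5, 8, 3, 7, 2],
    cyc9 ![0, 7, 1, 4, 5, 2, 8, 6, 3]]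

/-- The directed circulant `Circ(9; {1,2,3,4,6,7})` minus the three arcs
`(3,1)`, `(4,2)`, `(5,0)` admits a decomposition into five directed 9-cycles and
three pairwise vertex-disjoint directed paths: a `(1,3)`-path of length 1, a
`(2,4)`-path of length 1, and a `(0,5)`-path of length 4. -/
theorem circ9_X_decomposition :
    ∃ (c : Fin 5 → ZMod 9 → ZMod 9) (q₁ : Fin 2 → ZMod 9) (q₂ : Fin 2 → ZMod 9)
      (q₃ : Fin 5 → ZMod 9),
      (∀ t, Function.Injective (c t)) ∧
      Function.Injective q₁ ∧ Function.Injective q₂ ∧ Function.Injective q₃ ∧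
      q₁ 0 = 1 ∧ q₁ 1 = 3 ∧ q₂ 0 = 2 ∧ q₂ 1 = 4 ∧ q₃ 0 = 0 ∧ q₃ 4 = 5 ∧
      Disjoint (Set.range q₁) (Set.range q₂) ∧
      Disjoint (Set.range q₁) (Set.range q₃) ∧
      Disjoint (Set.range q₂) (Set.range q₃) ∧
      Pairwise (Function.onFun Disjoint
        ![cycArcs9 (c 0), cycArcs9 (c 1), cycArcs9 (c 2), cycArcs9 (c 3),
          cycArcs9 (c 4), pathArcs9 (n := 1) q₁, pathArcs9 (n := 1) q₂,
          pathArcs9 (n := 4) q₃]) ∧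
      cycArcs9 (c 0) ∪ cycArcs9 (c 1) ∪ cycArcs9 (c 2) ∪ cycArcs9 (c 3) ∪
          cycArcs9 (c 4) ∪ pathArcs9 (n := 1) q₁ ∪ pathArcs9 (n := 1) q₂ ∪
          pathArcs9 (n := 4) q₃ =
        {q : ZMod 9 × ZMod 9 | q.2 - q.1 ∈ ({1, 2, 3, 4, 6, 7} : Set (ZMod 9))} \
          {((3 : ZMod 9), (1 : ZMod 9)), ((4 : ZMod 9), (2 : ZMod 9)),
           ((5 : ZMod 9), (0 : ZMod 9))} := by
  refine ⟨cs9, ![1, 3], ![2, 4], ![0, 6, 7, 8, 5], ?_, ?_, ?_, ?_, rfl, rfl, rfl, rfl, rfl, rfl,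
      ?_, ?_, ?_, ?_, ?_⟩
  · intro t; fin_cases t <;> decide
  · decide
  · decide
  · decide
  · rw [Set.disjoint_left]; rintro a ⟨i, rfl⟩ ⟨j, hj⟩; fin_cases i <;> fin_cases j <;>
      simp_all <;> exact absurd hj (by decide)
  · rw [Set.disjoint_left]; rintro a ⟨i, rfl⟩ ⟨j, hj⟩; fin_cases i <;> fin_cases j <;>
      simp_all <;> exact absurd hj (by decide)
  · rw [Set.disjoint_left]; rintro a ⟨i, rfl⟩ ⟨j, hj⟩; fin_cases i <;> fin_cases j <;>
      simp_all <;> exact absurd hj (by decide)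
  ·
    intro i j hij
    fin_cases i <;> fin_cases j
    · exact absurd rfl hij
    · exact Set.disjoint_left.mpr (by decide : ∀ ⦃a : ZMod 9 × ZMod 9⦄, a ∈ cycArcs9 (cs9 0) → a ∉ cycArcs9 (cs9 1))
    · exact Set.disjoint_left.mpr (by decide : ∀ ⦃a : ZMod 9 × ZMod 9⦄, a ∈ cycArcs9 (cs9 0) → a ∉ cycArcs9 (cs9 2))
    · exact Set.disjoint_left.mpr (by decide : ∀ ⦃a : ZMod 9 × ZMod 9⦄, a ∈ cycArcs9 (cs9 0) → a ∉ cycArcs9 (cs9 3))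
    · exact Set.disjoint_left.mpr (by decide : ∀ ⦃a : ZMod 9 × ZMod 9⦄, a ∈ cycArcs9 (cs9 0) → a ∉ cycArcs9 (cs9 4))
    · exact Set.disjoint_left.mpr (by decide : ∀ ⦃a : ZMod 9 × ZMod 9⦄, a ∈ cycArcs9 (cs9 0) → a ∉ pathArcs9 (n := 1) ![1, 3])
    · exact Set.disjoint_left.mpr (by decide : ∀ ⦃a : ZMod 9 × ZMod 9⦄, a ∈ cycArcs9 (cs9 0) → a ∉ pathArcs9 (n := 1) ![2, 4])
    · exact Set.disjoint_left.mpr (by decide : ∀ ⦃a : ZMod 9 × ZMod 9⦄, a ∈ cycArcs9 (cs9 0) → a ∉ pathArcs9 (n := 4) ![0, 6, 7, 8, 5])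
    · exact Set.disjoint_left.mpr (by decide : ∀ ⦃a : ZMod 9 × ZMod 9⦄, a ∈ cycArcs9 (cs9 1) → a ∉ cycArcs9 (cs9 0))
    · exact absurd rfl hij
    · exact Set.disjoint_left.mpr (by decide : ∀ ⦃a : ZMod 9 × ZMod 9⦄, a ∈ cycArcs9 (cs9 1) → a ∉ cycArcs9 (cs9 2))
    · exact Set.disjoint_left.mpr (by decide : ∀ ⦃a : ZMod 9 × ZMod 9⦄, a ∈ cycArcs9 (cs9 1) → a ∉ cycArcs9 (cs9 3))
    · exact Set.disjoint_left.mpr (by decide : ∀ ⦃a : ZMod 9 × ZMod 9⦄, a ∈ cycArcs9 (cs9 1) → a ∉ cycArcs9 (cs9 4))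
    · exact Set.disjoint_left.mpr (by decide : ∀ ⦃a : ZMod 9 × ZMod 9⦄, a ∈ cycArcs9 (cs9 1) → a ∉ pathArcs9 (n := 1) ![1, 3])
    · exact Set.disjoint_left.mpr (by decide : ∀ ⦃a : ZMod 9 × ZMod 9⦄, a ∈ cycArcs9 (cs9 1) → a ∉ pathArcs9 (n := 1) ![2, 4])
    · exact Set.disjoint_left.mpr (by decide : ∀ ⦃a : ZMod 9 × ZMod 9⦄, a ∈ cycArcs9 (cs9 1) → a ∉ pathArcs9 (n := 4) ![0, 6, 7, 8, 5])
    · exact Set.disjoint_left.mpr (by decide : ∀ ⦃a : ZMod 9 × ZMod 9⦄, a ∈ cycArcs9 (cs9 2) → a ∉ cycArcs9 (cs9 0))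
    · exact Set.disjoint_left.mpr (by decide : ∀ ⦃a : ZMod 9 × ZMod 9⦄, a ∈ cycArcs9 (cs9 2) → a ∉ cycArcs9 (cs9 1))
    · exact absurd rfl hij
    · exact Set.disjoint_left.mpr (by decide : ∀ ⦃a : ZMod 9 × ZMod 9⦄, a ∈ cycArcs9 (cs9 2) → a ∉ cycArcs9 (cs9 3))
    · exact Set.disjoint_left.mpr (by decide : ∀ ⦃a : ZMod 9 × ZMod 9⦄, a ∈ cycArcs9 (cs9 2) → a ∉ cycArcs9 (cs9 4))
    · exact Set.disjoint_left.mpr (by decide : ∀ ⦃a : ZMod 9 × ZMod 9⦄, a ∈ cycArcs9 (cs9 2) → a ∉ pathArcs9 (n := 1) ![1, 3])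
    · exact Set.disjoint_left.mpr (by decide : ∀ ⦃a : ZMod 9 × ZMod 9⦄, a ∈ cycArcs9 (cs9 2) → a ∉ pathArcs9 (n := 1) ![2, 4])
    · exact Set.disjoint_left.mpr (by decide : ∀ ⦃a : ZMod 9 × ZMod 9⦄, a ∈ cycArcs9 (cs9 2) → a ∉ pathArcs9 (n := 4) ![0, 6, 7, 8, 5])
    · exact Set.disjoint_left.mpr (by decide : ∀ ⦃a : ZMod 9 × ZMod 9⦄, a ∈ cycArcs9 (cs9 3) → a ∉ cycArcs9 (cs9 0))
    · exact Set.disjoint_left.mpr (by decide : ∀ ⦃a : ZMod 9 × ZMod 9⦄, a ∈ cycArcs9 (cs9 3) → a ∉ cycArcs9 (cs9 1))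
    · exact Set.disjoint_left.mpr (by decide : ∀ ⦃a : ZMod 9 × ZMod 9⦄, a ∈ cycArcs9 (cs9 3) → a ∉ cycArcs9 (cs9 2))
    · exact absurd rfl hij
    · exact Set.disjoint_left.mpr (by decide : ∀ ⦃a : ZMod 9 × ZMod 9⦄, a ∈ cycArcs9 (cs9 3) → a ∉ cycArcs9 (cs9 4))
    · exact Set.disjoint_left.mpr (by decide : ∀ ⦃a : ZMod 9 × ZMod 9⦄, a ∈ cycArcs9 (cs9 3) → a ∉ pathArcs9 (n := 1) ![1, 3])
    · exact Set.disjoint_left.mpr (by decide : ∀ ⦃a : ZMod 9 × ZMod 9⦄, a ∈ cycArcs9 (cs9 3) → a ∉ pathArcs9 (n := 1) ![2, 4])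
    · exact Set.disjoint_left.mpr (by decide : ∀ ⦃a : ZMod 9 × ZMod 9⦄, a ∈ cycArcs9 (cs9 3) → a ∉ pathArcs9 (n := 4) ![0, 6, 7, 8, 5])
    · exact Set.disjoint_left.mpr (by decide : ∀ ⦃a : ZMod 9 × ZMod 9⦄, a ∈ cycArcs9 (cs9 4) → a ∉ cycArcs9 (cs9 0))
    · exact Set.disjoint_left.mpr (by decide : ∀ ⦃a : ZMod 9 × ZMod 9⦄, a ∈ cycArcs9 (cs9 4) → a ∉ cycArcs9 (cs9 1))
    · exact Set.disjoint_left.mpr (by decide : ∀ ⦃a : ZMod 9 × ZMod 9⦄, a ∈ cycArcs9 (cs9 4) → a ∉ cycArcs9 (cs9 2))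
    · exact Set.disjoint_left.mpr (by decide : ∀ ⦃a : ZMod 9 × ZMod 9⦄, a ∈ cycArcs9 (cs9 4) → a ∉ cycArcs9 (cs9 3))
    · exact absurd rfl hij
    · exact Set.disjoint_left.mpr (by decide : ∀ ⦃a : ZMod 9 × ZMod 9⦄, a ∈ cycArcs9 (cs9 4) → a ∉ pathArcs9 (n := 1) ![1, 3])
    · exact Set.disjoint_left.mpr (by decide : ∀ ⦃a : ZMod 9 × ZMod 9⦄, a ∈ cycArcs9 (cs9 4) → a ∉ pathArcs9 (n := 1) ![2, 4])
    · exact Set.disjoint_left.mpr (by decide : ∀ ⦃a : ZMod 9 × ZMod 9⦄, a ∈ cycArcs9 (cs9 4) → a ∉ pathArcs9 (n := 4) ![0, 6, 7, 8, 5])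
    · exact Set.disjoint_left.mpr (by decide : ∀ ⦃a : ZMod 9 × ZMod 9⦄, a ∈ pathArcs9 (n := 1) ![1, 3] → a ∉ cycArcs9 (cs9 0))
    · exact Set.disjoint_left.mpr (by decide : ∀ ⦃a : ZMod 9 × ZMod 9⦄, a ∈ pathArcs9 (n := 1) ![1, 3] → a ∉ cycArcs9 (cs9 1))
    · exact Set.disjoint_left.mpr (by decide : ∀ ⦃a : ZMod 9 × ZMod 9⦄, a ∈ pathArcs9 (n := 1) ![1, 3] → a ∉ cycArcs9 (cs9 2))
    · exact Set.disjoint_left.mpr (by decide : ∀ ⦃a : ZMod 9 × ZMod 9⦄, a ∈ pathArcs9 (n := 1) ![1, 3] → a ∉ cycArcs9 (cs9 3))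
    · exact Set.disjoint_left.mpr (by decide : ∀ ⦃a : ZMod 9 × ZMod 9⦄, a ∈ pathArcs9 (n := 1) ![1, 3] → a ∉ cycArcs9 (cs9 4))
    · exact absurd rfl hij
    · exact Set.disjoint_left.mpr (by decide : ∀ ⦃a : ZMod 9 × ZMod 9⦄, a ∈ pathArcs9 (n := 1) ![1, 3] → a ∉ pathArcs9 (n := 1) ![2, 4])
    · exact Set.disjoint_left.mpr (by decide : ∀ ⦃a : ZMod 9 × ZMod 9⦄, a ∈ pathArcs9 (n := 1) ![1, 3] → a ∉ pathArcs9 (n := 4) ![0, 6, 7, 8, 5])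
    · exact Set.disjoint_left.mpr (by decide : ∀ ⦃a : ZMod 9 × ZMod 9⦄, a ∈ pathArcs9 (n := 1) ![2, 4] → a ∉ cycArcs9 (cs9 0))
    · exact Set.disjoint_left.mpr (by decide : ∀ ⦃a : ZMod 9 × ZMod 9⦄, a ∈ pathArcs9 (n := 1) ![2, 4] → a ∉ cycArcs9 (cs9 1))
    · exact Set.disjoint_left.mpr (by decide : ∀ ⦃a : ZMod 9 × ZMod 9⦄, a ∈ pathArcs9 (n := 1) ![2, 4] → a ∉ cycArcs9 (cs9 2))
    · exact Set.disjoint_left.mpr (by decide : ∀ ⦃a : ZMod 9 × ZMod 9⦄, a ∈ pathArcs9 (n := 1) ![2, 4] → a ∉ cycArcs9 (cs9 3))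
    · exact Set.disjoint_left.mpr (by decide : ∀ ⦃a : ZMod 9 × ZMod 9⦄, a ∈ pathArcs9 (n := 1) ![2, 4] → a ∉ cycArcs9 (cs9 4))
    · exact Set.disjoint_left.mpr (by decide : ∀ ⦃a : ZMod 9 × ZMod 9⦄, a ∈ pathArcs9 (n := 1) ![2, 4] → a ∉ pathArcs9 (n := 1) ![1, 3])
    · exact absurd rfl hij
    · exact Set.disjoint_left.mpr (by decide : ∀ ⦃a : ZMod 9 × ZMod 9⦄, a ∈ pathArcs9 (n := 1) ![2, 4] → a ∉ pathArcs9 (n := 4) ![0, 6, 7, 8, 5])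
    · exact Set.disjoint_left.mpr (by decide : ∀ ⦃a : ZMod 9 × ZMod 9⦄, a ∈ pathArcs9 (n := 4) ![0, 6, 7, 8, 5] → a ∉ cycArcs9 (cs9 0))
    · exact Set.disjoint_left.mpr (by decide : ∀ ⦃a : ZMod 9 × ZMod 9⦄, a ∈ pathArcs9 (n := 4) ![0, 6, 7, 8, 5] → a ∉ cycArcs9 (cs9 1))
    · exact Set.disjoint_left.mpr (by decide : ∀ ⦃a : ZMod 9 × ZMod 9⦄, a ∈ pathArcs9 (n := 4) ![0, 6, 7, 8, 5] → a ∉ cycArcs9 (cs9 2))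
    · exact Set.disjoint_left.mpr (by decide : ∀ ⦃a : ZMod 9 × ZMod 9⦄, a ∈ pathArcs9 (n := 4) ![0, 6, 7, 8, 5] → a ∉ cycArcs9 (cs9 3))
    · exact Set.disjoint_left.mpr (by decide : ∀ ⦃a : ZMod 9 × ZMod 9⦄, a ∈ pathArcs9 (n := 4) ![0, 6, 7, 8, 5] → a ∉ cycArcs9 (cs9 4))
    · exact Set.disjoint_left.mpr (by decide : ∀ ⦃a : ZMod 9 × ZMod 9⦄, a ∈ pathArcs9 (n := 4) ![0, 6, 7, 8, 5] → a ∉ pathArcs9 (n := 1) ![1, 3])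
    · exact Set.disjoint_left.mpr (by decide : ∀ ⦃a : ZMod 9 × ZMod 9⦄, a ∈ pathArcs9 (n := 4) ![0, 6, 7, 8, 5] → a ∉ pathArcs9 (n := 1) ![2, 4])
    · exact absurd rfl hij
  · ext p
    simp only [cycArcs9, pathArcs9, Set.mem_union, Set.mem_setOf_eq, Set.mem_diff,
      Set.mem_insert_iff, Set.mem_singleton_iff]
    revert p
    decide
end

section
/- The directed circulant Circ(9; {1,3,4,6,7,8}) minus the three arcs (1,2), (3,4), (8,6) admits a decomposition into five directed 9-cycles and three pairwise vertex-disjoint directed paths: a (2,3)-path of length 1, a (4,1)-path of length 2, and a (6,8)-path of length 3. -/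
def C : Fin 5 → ZMod 9 → ZMod 9 := fun t i =>
  ![![0, 1, 4, 2, 5, 3, 6, 7, 8],
    ![0, 3, 1, 5, 4, 8, 7, 2, 6],
    ![0, 4, 5, 8, 2, 1, 7, 6, 3],
    ![0, 6, 4, 1, 8, 3, 7, 5, 2],
    ![0, 7, 4, 3, 2, 8, 5, 6, 1]] t i

instance inst_s14 (c : ZMod 9 → ZMod 9) (p : ZMod 9 × ZMod 9) : Decidable (p ∈ cycArcs9 c) :=
  inferInstanceAs (Decidable (∃ i : ZMod 9, p = (c i, c (i + 1))))

instance {n : ℕ} (f : Fin (n + 1) → ZMod 9) (q : ZMod 9 × ZMod 9) :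
    Decidable (q ∈ pathArcs9 f) :=
  inferInstanceAs (Decidable (∃ i : Fin n, q = (f i.castSucc, f i.succ)))

/-- The directed circulant `Circ(9; {1,3,4,6,7,8})` minus the three arcs
`(1,2)`, `(3,4)`, `(8,6)` admits a decomposition into five directed 9-cycles and
three pairwise vertex-disjoint directed paths: a `(2,3)`-path of length 1, a
`(4,1)`-path of length 2, and a `(6,8)`-path of length 3. -/
theorem circ9_Y_decomposition :
    ∃ (c : Fin 5 → ZMod 9 → ZMod 9) (q₁ : Fin 2 → ZMod 9) (q₂ : Fin 3 → ZMod 9)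
      (q₃ : Fin 4 → ZMod 9),
      (∀ t, Function.Injective (c t)) ∧
      Function.Injective q₁ ∧ Function.Injective q₂ ∧ Function.Injective q₃ ∧
      q₁ 0 = 2 ∧ q₁ 1 = 3 ∧ q₂ 0 = 4 ∧ q₂ 2 = 1 ∧ q₃ 0 = 6 ∧ q₃ 3 = 8 ∧
      Disjoint (Set.range q₁) (Set.range q₂) ∧
      Disjoint (Set.range q₁) (Set.range q₃) ∧
      Disjoint (Set.range q₂) (Set.range q₃) ∧
      Pairwise (Function.onFun Disjoint
        ![cycArcs9 (c 0), cycArcs9 (c 1), cycArcs9 (c 2), cycArcs9 (c 3),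
          cycArcs9 (c 4), pathArcs9 (n := 1) q₁, pathArcs9 (n := 2) q₂,
          pathArcs9 (n := 3) q₃]) ∧
      cycArcs9 (c 0) ∪ cycArcs9 (c 1) ∪ cycArcs9 (c 2) ∪ cycArcs9 (c 3) ∪
          cycArcs9 (c 4) ∪ pathArcs9 (n := 1) q₁ ∪ pathArcs9 (n := 2) q₂ ∪
          pathArcs9 (n := 3) q₃ =
        {q : ZMod 9 × ZMod 9 | q.2 - q.1 ∈ ({1, 3, 4, 6, 7, 8} : Set (ZMod 9))} \
          {((1 : ZMod 9), (2 : ZMod 9)), ((3 : ZMod 9), (4 : ZMod 9)),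
           ((8 : ZMod 9), (6 : ZMod 9))} := by
  refine ⟨C, ![2, 3], ![4, 7, 1], ![6, 5, 0, 8], ?_, ?_, ?_, ?_, rfl, rfl, rfl, rfl, rfl, rfl,
    ?_, ?_, ?_, ?_, ?_⟩
  · decide
  · decide
  · decide
  · decide
  · rw [Set.disjoint_left]; decide
  · rw [Set.disjoint_left]; decide
  · rw [Set.disjoint_left]; decide
  · intro i j hij
    fin_cases i <;> fin_cases j
    · exact absurd rfl hij
    · show Disjoint (cycArcs9 (C 0)) (cycArcs9 (C 1))
      rw [Set.disjoint_left]; decide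
    · show Disjoint (cycArcs9 (C 0)) (cycArcs9 (C 2))
      rw [Set.disjoint_left]; decide
    · show Disjoint (cycArcs9 (C 0)) (cycArcs9 (C 3))
      rw [Set.disjoint_left]; decide
    · show Disjoint (cycArcs9 (C 0)) (cycArcs9 (C 4))
      rw [Set.disjoint_left]; decide
    · show Disjoint (cycArcs9 (C 0)) (pathArcs9 (n := 1) (![2, 3] : Fin 2 → ZMod 9))
      rw [Set.disjoint_left]; decide
    · show Disjoint (cycArcs9 (C 0)) (pathArcs9 (n := 2) (![4, 7, 1] : Fin 3 → ZMod 9))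
      rw [Set.disjoint_left]; decide
    · show Disjoint (cycArcs9 (C 0)) (pathArcs9 (n := 3) (![6, 5, 0, 8] : Fin 4 → ZMod 9))
      rw [Set.disjoint_left]; decide
    · show Disjoint (cycArcs9 (C 1)) (cycArcs9 (C 0))
      rw [Set.disjoint_left]; decide
    · exact absurd rfl hij
    · show Disjoint (cycArcs9 (C 1)) (cycArcs9 (C 2))
      rw [Set.disjoint_left]; decide
    · show Disjoint (cycArcs9 (C 1)) (cycArcs9 (C 3))
      rw [Set.disjoint_left]; decide
    · show Disjoint (cycArcs9 (C 1)) (cycArcs9 (C 4))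
      rw [Set.disjoint_left]; decide
    · show Disjoint (cycArcs9 (C 1)) (pathArcs9 (n := 1) (![2, 3] : Fin 2 → ZMod 9))
      rw [Set.disjoint_left]; decide
    · show Disjoint (cycArcs9 (C 1)) (pathArcs9 (n := 2) (![4, 7, 1] : Fin 3 → ZMod 9))
      rw [Set.disjoint_left]; decide
    · show Disjoint (cycArcs9 (C 1)) (pathArcs9 (n := 3) (![6, 5, 0, 8] : Fin 4 → ZMod 9))
      rw [Set.disjoint_left]; decide
    · show Disjoint (cycArcs9 (C 2)) (cycArcs9 (C 0))
      rw [Set.disjoint_left]; decide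
    · show Disjoint (cycArcs9 (C 2)) (cycArcs9 (C 1))
      rw [Set.disjoint_left]; decide
    · exact absurd rfl hij
    · show Disjoint (cycArcs9 (C 2)) (cycArcs9 (C 3))
      rw [Set.disjoint_left]; decide
    · show Disjoint (cycArcs9 (C 2)) (cycArcs9 (C 4))
      rw [Set.disjoint_left]; decide
    · show Disjoint (cycArcs9 (C 2)) (pathArcs9 (n := 1) (![2, 3] : Fin 2 → ZMod 9))
      rw [Set.disjoint_left]; decide
    · show Disjoint (cycArcs9 (C 2)) (pathArcs9 (n := 2) (![4, 7, 1] : Fin 3 → ZMod 9))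
      rw [Set.disjoint_left]; decide
    · show Disjoint (cycArcs9 (C 2)) (pathArcs9 (n := 3) (![6, 5, 0, 8] : Fin 4 → ZMod 9))
      rw [Set.disjoint_left]; decide
    · show Disjoint (cycArcs9 (C 3)) (cycArcs9 (C 0))
      rw [Set.disjoint_left]; decide
    · show Disjoint (cycArcs9 (C 3)) (cycArcs9 (C 1))
      rw [Set.disjoint_left]; decide
    · show Disjoint (cycArcs9 (C 3)) (cycArcs9 (C 2))
      rw [Set.disjoint_left]; decide
    · exact absurd rfl hij
    · show Disjoint (cycArcs9 (C 3)) (cycArcs9 (C 4))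
      rw [Set.disjoint_left]; decide
    · show Disjoint (cycArcs9 (C 3)) (pathArcs9 (n := 1) (![2, 3] : Fin 2 → ZMod 9))
      rw [Set.disjoint_left]; decide
    · show Disjoint (cycArcs9 (C 3)) (pathArcs9 (n := 2) (![4, 7, 1] : Fin 3 → ZMod 9))
      rw [Set.disjoint_left]; decide
    · show Disjoint (cycArcs9 (C 3)) (pathArcs9 (n := 3) (![6, 5, 0, 8] : Fin 4 → ZMod 9))
      rw [Set.disjoint_left]; decide
    · show Disjoint (cycArcs9 (C 4)) (cycArcs9 (C 0))
      rw [Set.disjoint_left]; decide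
    · show Disjoint (cycArcs9 (C 4)) (cycArcs9 (C 1))
      rw [Set.disjoint_left]; decide
    · show Disjoint (cycArcs9 (C 4)) (cycArcs9 (C 2))
      rw [Set.disjoint_left]; decide
    · show Disjoint (cycArcs9 (C 4)) (cycArcs9 (C 3))
      rw [Set.disjoint_left]; decide
    · exact absurd rfl hij
    · show Disjoint (cycArcs9 (C 4)) (pathArcs9 (n := 1) (![2, 3] : Fin 2 → ZMod 9))
      rw [Set.disjoint_left]; decide
    · show Disjoint (cycArcs9 (C 4)) (pathArcs9 (n := 2) (![4, 7, 1] : Fin 3 → ZMod 9))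
      rw [Set.disjoint_left]; decide
    · show Disjoint (cycArcs9 (C 4)) (pathArcs9 (n := 3) (![6, 5, 0, 8] : Fin 4 → ZMod 9))
      rw [Set.disjoint_left]; decide
    · show Disjoint (pathArcs9 (n := 1) (![2, 3] : Fin 2 → ZMod 9)) (cycArcs9 (C 0))
      rw [Set.disjoint_left]; decide
    · show Disjoint (pathArcs9 (n := 1) (![2, 3] : Fin 2 → ZMod 9)) (cycArcs9 (C 1))
      rw [Set.disjoint_left]; decide
    · show Disjoint (pathArcs9 (n := 1) (![2, 3] : Fin 2 → ZMod 9)) (cycArcs9 (C 2))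
      rw [Set.disjoint_left]; decide
    · show Disjoint (pathArcs9 (n := 1) (![2, 3] : Fin 2 → ZMod 9)) (cycArcs9 (C 3))
      rw [Set.disjoint_left]; decide
    · show Disjoint (pathArcs9 (n := 1) (![2, 3] : Fin 2 → ZMod 9)) (cycArcs9 (C 4))
      rw [Set.disjoint_left]; decide
    · exact absurd rfl hij
    · show Disjoint (pathArcs9 (n := 1) (![2, 3] : Fin 2 → ZMod 9)) (pathArcs9 (n := 2) (![4, 7, 1] : Fin 3 → ZMod 9))
      rw [Set.disjoint_left]; decide
    · show Disjoint (pathArcs9 (n := 1) (![2, 3] : Fin 2 → ZMod 9)) (pathArcs9 (n := 3) (![6, 5, 0, 8] : Fin 4 → ZMod 9))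
      rw [Set.disjoint_left]; decide
    · show Disjoint (pathArcs9 (n := 2) (![4, 7, 1] : Fin 3 → ZMod 9)) (cycArcs9 (C 0))
      rw [Set.disjoint_left]; decide
    · show Disjoint (pathArcs9 (n := 2) (![4, 7, 1] : Fin 3 → ZMod 9)) (cycArcs9 (C 1))
      rw [Set.disjoint_left]; decide
    · show Disjoint (pathArcs9 (n := 2) (![4, 7, 1] : Fin 3 → ZMod 9)) (cycArcs9 (C 2))
      rw [Set.disjoint_left]; decide
    · show Disjoint (pathArcs9 (n := 2) (![4, 7, 1] : Fin 3 → ZMod 9)) (cycArcs9 (C 3))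
      rw [Set.disjoint_left]; decide
    · show Disjoint (pathArcs9 (n := 2) (![4, 7, 1] : Fin 3 → ZMod 9)) (cycArcs9 (C 4))
      rw [Set.disjoint_left]; decide
    · show Disjoint (pathArcs9 (n := 2) (![4, 7, 1] : Fin 3 → ZMod 9)) (pathArcs9 (n := 1) (![2, 3] : Fin 2 → ZMod 9))
      rw [Set.disjoint_left]; decide
    · exact absurd rfl hij
    · show Disjoint (pathArcs9 (n := 2) (![4, 7, 1] : Fin 3 → ZMod 9)) (pathArcs9 (n := 3) (![6, 5, 0, 8] : Fin 4 → ZMod 9))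
      rw [Set.disjoint_left]; decide
    · show Disjoint (pathArcs9 (n := 3) (![6, 5, 0, 8] : Fin 4 → ZMod 9)) (cycArcs9 (C 0))
      rw [Set.disjoint_left]; decide
    · show Disjoint (pathArcs9 (n := 3) (![6, 5, 0, 8] : Fin 4 → ZMod 9)) (cycArcs9 (C 1))
      rw [Set.disjoint_left]; decide
    · show Disjoint (pathArcs9 (n := 3) (![6, 5, 0, 8] : Fin 4 → ZMod 9)) (cycArcs9 (C 2))
      rw [Set.disjoint_left]; decide
    · show Disjoint (pathArcs9 (n := 3) (![6, 5, 0, 8] : Fin 4 → ZMod 9)) (cycArcs9 (C 3))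
      rw [Set.disjoint_left]; decide
    · show Disjoint (pathArcs9 (n := 3) (![6, 5, 0, 8] : Fin 4 → ZMod 9)) (cycArcs9 (C 4))
      rw [Set.disjoint_left]; decide
    · show Disjoint (pathArcs9 (n := 3) (![6, 5, 0, 8] : Fin 4 → ZMod 9)) (pathArcs9 (n := 1) (![2, 3] : Fin 2 → ZMod 9))
      rw [Set.disjoint_left]; decide
    · show Disjoint (pathArcs9 (n := 3) (![6, 5, 0, 8] : Fin 4 → ZMod 9)) (pathArcs9 (n := 2) (![4, 7, 1] : Fin 3 → ZMod 9))
      rw [Set.disjoint_left]; decide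
    · exact absurd rfl hij

  · rw [Set.ext_iff]
    simp only [Set.mem_union, Set.mem_diff, Set.mem_setOf_eq, Set.mem_insert_iff,
      Set.mem_singleton_iff]
    decide
end
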